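/- Any minor (determinant of any square submatrix) of an integer matrix all of whose columns are of the form ±e_i ± e_j (sums or differences of two distinct standard basis vectors, with arbitrary signs) is either 0 or ±2^ℓ for some integer ℓ ≥ 0. -/

import Mathlib

open Matrix Finset

/-- The goal predicate: `d` is `0` or `±2^ℓ`. -/
private def Good (d : ℤ) : Prop := d = 0 ∨ ∃ ℓ : ℕ, d = 2 ^ ℓ ∨ d = -(2 ^ ℓ)

/-- The class of matrices we induct over: entries in `{0, 1, -1}` and each column has
at most two nonzero entries. -/
private def InCl {k : ℕ} (A : Matrix (Fin k) (Fin k) ℤ) : Prop :=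
  (∀ r c, A r c = 0 ∨ A r c = 1 ∨ A r c = -1) ∧
  ∀ c, (Finset.univ.filter fun r => A r c ≠ 0).card ≤ 2

private lemma good_mul_unit {u d : ℤ} (hu : u = 1 ∨ u = -1) (h : Good d) : Good (u * d) := by
  rcases hu with hu | hu <;> subst hu
  · simpa using h
  · rcases h with h | ⟨ℓ, h | h⟩
    · left; simp [h]
    · exact Or.inr ⟨ℓ, Or.inr (by rw [h]; ring)⟩
    · exact Or.inr ⟨ℓ, Or.inl (by rw [h]; ring)⟩

private lemma good_two_mul {d : ℤ} (h : Good d) : Good (2 * d) := by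
  rcases h with h | ⟨ℓ, h | h⟩
  · left; simp [h]
  · exact Or.inr ⟨ℓ + 1, Or.inl (by rw [h]; ring)⟩
  · exact Or.inr ⟨ℓ + 1, Or.inr (by rw [h]; ring)⟩

private lemma good_mul_small {d g : ℤ}
    (hd : d = 0 ∨ d = 1 ∨ d = -1 ∨ d = 2 ∨ d = -2) (hg : Good g) : Good (d * g) := by
  rcases hd with h | h | h | h | h <;> subst h
  · left; ring
  · exact good_mul_unit (Or.inl rfl) hg
  · exact good_mul_unit (Or.inr rfl) hg
  · exact good_two_mul hg
  · have : (-2 : ℤ) * g = -1 * (2 * g) := by ring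
    rw [this]; exact good_mul_unit (Or.inr rfl) (good_two_mul hg)

/-- Minors (deleting rows injectively, any columns) stay in the class. -/
private lemma incl_sub {k : ℕ} {A : Matrix (Fin (k + 1)) (Fin (k + 1)) ℤ} (hA : InCl A)
    (ρ γ : Fin k → Fin (k + 1)) (hρ : Function.Injective ρ) :
    InCl (A.submatrix ρ γ) := by
  refine ⟨fun r c => hA.1 _ _, fun c => ?_⟩
  calc (Finset.univ.filter fun r => A.submatrix ρ γ r c ≠ 0).card
      ≤ (Finset.univ.filter fun r => A r (γ c) ≠ 0).card := by
        apply Finset.card_le_card_of_injOn ρ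
        · intro r hr
          simp only [Finset.mem_filter, Finset.mem_univ, true_and,
            Matrix.submatrix_apply] at hr ⊢
          exact Finset.mem_filter.mpr ⟨Finset.mem_univ _, (Finset.mem_filter.mp hr).2⟩
        · exact hρ.injOn
    _ ≤ 2 := hA.2 _

/-- If a column has at most one nonzero entry, expand along it. -/
private lemma det_single_col {k : ℕ}
    (IH : ∀ B : Matrix (Fin k) (Fin k) ℤ, InCl B → Good B.det)
    (A : Matrix (Fin (k + 1)) (Fin (k + 1)) ℤ) (hA : InCl A) (c r : Fin (k + 1))
    (h : ∀ r', r' ≠ r → A r' c = 0) : Good A.det := by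
  rw [Matrix.det_succ_column A c, Finset.sum_eq_single r]
  · have hm : Good (A.submatrix r.succAbove c.succAbove).det :=
      IH _ (incl_sub hA _ _ Fin.succAbove_right_injective)
    rcases hA.1 r c with h0 | h1
    · rw [h0]; left; ring
    · rw [mul_assoc]
      exact good_mul_unit (neg_one_pow_eq_or ℤ _) (good_mul_unit h1 hm)
  · intro b _ hb; rw [h b hb]; ring
  · intro hr; exact absurd (Finset.mem_univ r) hr

/-- If row 0 has at most one nonzero entry, expand along it. -/
private lemma det_single_row {k : ℕ}
    (IH : ∀ B : Matrix (Fin k) (Fin k) ℤ, InCl B → Good B.det)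
    (A : Matrix (Fin (k + 1)) (Fin (k + 1)) ℤ) (hA : InCl A) (c : Fin (k + 1))
    (h : ∀ c', c' ≠ c → A 0 c' = 0) : Good A.det := by
  rw [Matrix.det_succ_row_zero A, Finset.sum_eq_single c]
  · have hm : Good (A.submatrix Fin.succ c.succAbove).det :=
      IH _ (incl_sub hA _ _ (Fin.succ_injective k))
    rcases hA.1 0 c with h0 | h1
    · rw [h0]; left; ring
    · rw [mul_assoc]
      exact good_mul_unit (neg_one_pow_eq_or ℤ _) (good_mul_unit h1 hm)
  · intro b _ hb; rw [h b hb]; ring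
  · intro hc; exact absurd (Finset.mem_univ c) hc

private lemma key : ∀ (k : ℕ) (A : Matrix (Fin k) (Fin k) ℤ), InCl A → Good A.det := by
  intro k
  induction k with
  | zero =>
    intro A _
    exact Or.inr ⟨0, Or.inl (by simp)⟩
  | succ k IH =>
    suffices H : ∀ n (A : Matrix (Fin (k + 1)) (Fin (k + 1)) ℤ), InCl A →
        (Finset.univ.filter fun c => A 0 c ≠ 0).card ≤ n → Good A.det by
      intro A hA
      exact H (k + 1) A hA (le_trans (Finset.card_filter_le _ _) (by simp))
    intro n
    induction n with
    | zero =>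
      intro A hA hcard
      left
      apply Matrix.det_eq_zero_of_row_eq_zero 0
      intro c
      by_contra hc
      have hmem : c ∈ Finset.univ.filter (fun c => A 0 c ≠ 0) := by
        simp [hc]
      rw [Finset.card_eq_zero.mp (Nat.le_zero.mp hcard)] at hmem
      exact absurd hmem (Finset.notMem_empty c)
    | succ n IHn =>
      intro A hA hcard
      by_cases hle : (Finset.univ.filter fun c => A 0 c ≠ 0).card ≤ n
      · exact IHn A hA hle
      -- so the row-0 support has exactly n+1 elements
      have hcard' : (Finset.univ.filter fun c => A 0 c ≠ 0).card = n + 1 :=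
        le_antisymm hcard (Nat.lt_of_not_le hle)
      rcases Nat.eq_zero_or_pos n with hn | hn
      · -- exactly one nonzero in row 0: expand along row 0
        subst hn
        obtain ⟨c, hc⟩ := Finset.card_eq_one.mp hcard'
        refine det_single_row IH A hA c (fun c' hc' => ?_)
        by_contra h
        have : c' ∈ Finset.univ.filter (fun c => A 0 c ≠ 0) := by simp [h]
        rw [hc] at this
        exact hc' (Finset.mem_singleton.mp this)
      · -- at least two nonzeros in row 0
        have h2 : 1 < (Finset.univ.filter fun c => A 0 c ≠ 0).card := by omega
        obtain ⟨c, hcmem, c', hc'mem, hne⟩ := Finset.one_lt_card.mp h2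
        simp only [Finset.mem_filter, Finset.mem_univ, true_and] at hcmem hc'mem
        -- classify the columns c and c'
        have other : ∀ c0 : Fin (k + 1), A 0 c0 ≠ 0 →
            (∀ r, r ≠ 0 → A r c0 = 0) ∨
            ∃ i, i ≠ 0 ∧ ∀ r, r ≠ 0 → r ≠ i → A r c0 = 0 := by
          intro c0 h0
          by_cases hone : ∀ r, r ≠ 0 → A r c0 = 0
          · exact Or.inl hone
          · push_neg at hone
            obtain ⟨i, hi0, hi⟩ := hone
            refine Or.inr ⟨i, hi0, fun r hr0 hri => ?_⟩
            by_contra hr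
            have hsub : ({0, i, r} : Finset (Fin (k + 1))) ⊆
                Finset.univ.filter (fun r => A r c0 ≠ 0) := by
              intro x hx
              simp only [Finset.mem_insert, Finset.mem_singleton] at hx
              simp only [Finset.mem_filter, Finset.mem_univ, true_and]
              rcases hx with rfl | rfl | rfl <;> assumption
            have h3 : ({0, i, r} : Finset (Fin (k + 1))).card = 3 := by
              rw [Finset.card_insert_of_notMem (by simp [Ne.symm hi0, Ne.symm hr0]),
                Finset.card_insert_of_notMem (by simp [Ne.symm hri]),
                Finset.card_singleton]
            have := Finset.card_le_card hsub
            rw [h3] at this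
            have := hA.2 c0
            omega
        rcases other c hcmem with hcase | ⟨i, hi0, hi⟩
        · exact det_single_col IH A hA c 0 hcase
        rcases other c' hc'mem with hcase | ⟨j, hj0, hj⟩
        · exact det_single_col IH A hA c' 0 hcase
        -- column operation: kill the row-0 entry of column c' using column c
        set s : ℤ := -(A 0 c') * A 0 c with hs_def
        have hA0c : A 0 c = 1 ∨ A 0 c = -1 := (hA.1 0 c).resolve_left hcmem
        have hA0c' : A 0 c' = 1 ∨ A 0 c' = -1 := (hA.1 0 c').resolve_left hc'mem
        have hs : s = 1 ∨ s = -1 := by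
          rcases hA0c with h1 | h1 <;> rcases hA0c' with h2 | h2 <;>
            simp [hs_def, h1, h2]
        set B := A.updateCol c' (fun r => A r c' + s • A r c) with hB_def
        have hdet : B.det = A.det := Matrix.det_updateCol_add_smul_self A hne.symm s
        have hB0 : A 0 c' + s • A 0 c = 0 := by
          simp only [smul_eq_mul, hs_def]
          rcases hA0c with h1 | h1 <;> rw [h1] <;> ring
        by_cases hij : i = j
        · -- both columns share the same second row: column c' of B is d • e_i
          subst hij
          set d : ℤ := A i c' + s • A i c with hd_def
          have hcol : (fun r => A r c' + s • A r c) = d • Pi.single i (1 : ℤ) := by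
            funext r
            simp only [Pi.smul_apply, Pi.single_apply, smul_eq_mul]
            by_cases hri : r = i
            · subst hri; simp [hd_def]
            · rw [if_neg hri, mul_zero]
              by_cases hr0 : r = 0
              · subst hr0; exact hB0
              · rw [hi r hr0 hri, hj r hr0 hri]; simp
          set C := A.updateCol c' (Pi.single i (1 : ℤ)) with hC_def
          have hBC : B.det = d * C.det := by
            rw [hB_def, hcol, ← Matrix.det_updateCol_smul]
          have hC : InCl C := by
            constructor
            · intro r c''
              by_cases h : c'' = c'
              · subst h
                rw [hC_def, Matrix.updateCol_self]
                rcases eq_or_ne r i with hri | hri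
                · subst hri; right; left; simp
                · left; simp [Pi.single_apply, hri]
              · rw [hC_def, Matrix.updateCol_ne h]
                exact hA.1 r c''
            · intro c''
              by_cases h : c'' = c'
              · subst h
                have hsub : (Finset.univ.filter fun r => C r c'' ≠ 0) ⊆ {i} := by
                  intro r hr
                  simp only [Finset.mem_filter, Finset.mem_univ, true_and, hC_def,
                    Matrix.updateCol_self] at hr
                  simp only [Finset.mem_singleton]
                  by_contra hri
                  exact hr (by simp [Pi.single_apply, hri])
                exact le_trans (Finset.card_le_card hsub) (by simp)
              · have heq : (Finset.univ.filter fun r => C r c'' ≠ 0) =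
                    (Finset.univ.filter fun r => A r c'' ≠ 0) := by
                  apply Finset.filter_congr
                  intro r _
                  rw [hC_def, Matrix.updateCol_ne h]
                rw [heq]
                exact hA.2 c''
          have hGoodC : Good C.det := by
            refine det_single_col IH C hC c' i (fun r' hr' => ?_)
            rw [hC_def, Matrix.updateCol_self]
            simp [Pi.single_apply, hr']
          have hd : d = 0 ∨ d = 1 ∨ d = -1 ∨ d = 2 ∨ d = -2 := by
            rcases hA.1 i c' with h1 | h1 | h1 <;> rcases hA.1 i c with h2 | h2 | h2 <;>
              rcases hs with h3 | h3 <;>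
              simp [hd_def, h1, h2, h3] <;> norm_num
          have : A.det = d * C.det := by rw [← hdet, hBC]
          rw [this]
          exact good_mul_small hd hGoodC
        · -- distinct second rows: B stays in the class and has one fewer nonzero in row 0
          have hBapply : ∀ r c'', B r c'' =
              if c'' = c' then A r c' + s • A r c else A r c'' := by
            intro r c''
            rw [hB_def, Matrix.updateCol_apply]
          have hBcol : ∀ r, r ≠ i → r ≠ j → B r c' = 0 := by
            intro r hri hrj
            rw [hBapply, if_pos rfl]
            by_cases hr0 : r = 0
            · subst hr0; exact hB0
            · rw [hi r hr0 hri, hj r hr0 hrj]; simp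
          have hB : InCl B := by
            constructor
            · intro r c''
              rw [hBapply]
              by_cases h : c'' = c'
              · rw [if_pos h]
                by_cases hr0 : r = 0
                · subst hr0; rw [hB0]; exact Or.inl rfl
                by_cases hri : r = i
                · rw [hri, hj i hi0 hij]
                  rcases hs with h3 | h3 <;> rcases hA.1 i c with h2 | h2 | h2 <;>
                    simp [h3, h2]
                · rw [hi r hr0 hri]
                  simpa using hA.1 r c'
              · rw [if_neg h]; exact hA.1 r c''
            · intro c''
              by_cases h : c'' = c'
              · subst h
                have hsub : (Finset.univ.filter fun r => B r c'' ≠ 0) ⊆ {i, j} := by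
                  intro r hr
                  simp only [Finset.mem_filter, Finset.mem_univ, true_and] at hr
                  simp only [Finset.mem_insert, Finset.mem_singleton]
                  by_contra hrij
                  push_neg at hrij
                  exact hr (hBcol r hrij.1 hrij.2)
                refine le_trans (Finset.card_le_card hsub) ?_
                exact le_trans (Finset.card_insert_le _ _) (by simp)
              · have heq : (Finset.univ.filter fun r => B r c'' ≠ 0) =
                    (Finset.univ.filter fun r => A r c'' ≠ 0) := by
                  apply Finset.filter_congr
                  intro r _
                  rw [hBapply, if_neg h]
                rw [heq]
                exact hA.2 c''
          have hrow : (Finset.univ.filter fun c'' => B 0 c'' ≠ 0).card ≤ n := by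
            have hsub : (Finset.univ.filter fun c'' => B 0 c'' ≠ 0) ⊆
                (Finset.univ.filter fun c'' => A 0 c'' ≠ 0).erase c' := by
              intro x hx
              simp only [Finset.mem_filter, Finset.mem_univ, true_and] at hx
              have hxc' : x ≠ c' := by
                intro hxc'
                subst hxc'
                rw [hBapply, if_pos rfl] at hx
                exact hx hB0
              refine Finset.mem_erase.mpr ⟨hxc', ?_⟩
              simp only [Finset.mem_filter, Finset.mem_univ, true_and]
              rw [hBapply, if_neg hxc'] at hx
              exact hx
            have := Finset.card_le_card hsub
            rw [Finset.card_erase_of_mem (by simp [hc'mem]), hcard'] at this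
            omega
          rw [← hdet]
          exact IHn B hB hrow

/-- Any minor of an integer matrix all of whose columns have the form `±e_i ± e_j`
(with `i ≠ j`) is `0` or `±2^ℓ` for some `ℓ ≥ 0`. -/
theorem stmt_11 (m N : ℕ) (M : Matrix (Fin m) (Fin N) ℤ)
    (hcol : ∀ c : Fin N, ∃ i j : Fin m, ∃ ε ε' : ℤ, i ≠ j ∧
      (ε = 1 ∨ ε = -1) ∧ (ε' = 1 ∨ ε' = -1) ∧
      (fun r => M r c) = ε • Pi.single i (1 : ℤ) + ε' • Pi.single j 1)
    (k : ℕ) (f : Fin k → Fin m) (g : Fin k → Fin N)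
    (hf : Function.Injective f) (hg : Function.Injective g) :
    (M.submatrix f g).det = 0 ∨
      ∃ ℓ : ℕ, (M.submatrix f g).det = 2 ^ ℓ ∨ (M.submatrix f g).det = -(2 ^ ℓ) := by
  have hcl : InCl (M.submatrix f g) := by
    constructor
    · intro r c
      obtain ⟨i, j, ε, ε', hij, hε, hε', heq⟩ := hcol (g c)
      have hval : M (f r) (g c) =
          ε * (if f r = i then 1 else 0) + ε' * (if f r = j then 1 else 0) := by
        have := congrFun heq (f r)
        simpa [Pi.single_apply, smul_eq_mul] using this
      rw [Matrix.submatrix_apply, hval]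
      by_cases h1 : f r = i <;> by_cases h2 : f r = j
      · exact absurd (h1.symm.trans h2) hij
      · rcases hε with h | h <;> simp [h1, h2, h, hij, hij.symm]
      · rcases hε' with h | h <;> simp [h1, h2, h, hij, hij.symm]
      · simp [h1, h2]
    · intro c
      obtain ⟨i, j, ε, ε', hij, hε, hε', heq⟩ := hcol (g c)
      have hmap : ∀ r ∈ (Finset.univ.filter fun r => M.submatrix f g r c ≠ 0),
          f r ∈ ({i, j} : Finset (Fin m)) := by
        intro r hr
        simp only [Finset.mem_filter, Finset.mem_univ, true_and,
          Matrix.submatrix_apply] at hr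
        have hval := congrFun heq (f r)
        simp only [Pi.add_apply, Pi.smul_apply, smul_eq_mul, Pi.single_apply] at hval
        simp only [Finset.mem_insert, Finset.mem_singleton]
        by_contra hc
        push_neg at hc
        replace hr : M (f r) (g c) ≠ 0 := (Finset.mem_filter.mp hr).2
        rw [hval] at hr
        simp [hc.1, hc.2] at hr
      have := Finset.card_le_card_of_injOn f hmap hf.injOn
      refine le_trans this ?_
      exact le_trans (Finset.card_insert_le _ _) (by simp)
  exact key k (M.submatrix f g) hcl
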